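/- Let ω ∈ [0,2π) with ω ≠ 0, and set μ̄(0) = 2·((1-cos ω)/(3-2cos ω))², and for |x| ≥ 1 set μ̄(x) = μ̄(0) · (2-cos ω)/(3-2cos ω)^{|x|} · (1 + sign(x)·sin ω/(1+sin²ω)). Then the total mass ∑_{x∈ℤ} μ̄(x) is strictly less than 1. -/

import Mathlib

open Real

/-- Time-averaged limit measure of the one-defect quantum walk (Corollary 3.2 of Konno-Łuczak). -/
noncomputable def timeAvgMeasure (ω : ℝ) (x : ℤ) : ℝ :=
  if x = 0 then 2 * ((1 - Real.cos ω) / (3 - 2 * Real.cos ω)) ^ 2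
  else
    (2 * ((1 - Real.cos ω) / (3 - 2 * Real.cos ω)) ^ 2) *
      ((2 - Real.cos ω) / (3 - 2 * Real.cos ω) ^ (x.natAbs)) *
      (1 + (if 0 < x then (1 : ℝ) else -1) * Real.sin ω / (1 + Real.sin ω ^ 2))

theorem timeAvgMeasure_total_mass_lt_one (ω : ℝ) (hω : ω ∈ Set.Ico 0 (2 * π)) (hω0 : ω ≠ 0) :
    (∑' x : ℤ, timeAvgMeasure ω x) < 1 := by
  obtain ⟨h0, h2⟩ := hω
  set c := Real.cos ω with hc
  set s := Real.sin ω with hs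
  have hπ : 0 < π := Real.pi_pos
  have hc1 : c < 1 := by
    have hne : c ≠ 1 := by
      rw [hc]
      intro h
      exact hω0 ((Real.cos_eq_one_iff_of_lt_of_lt (by linarith) h2).mp h)
    exact lt_of_le_of_ne (Real.cos_le_one ω) hne
  have hcb : -1 ≤ c := Real.neg_one_le_cos ω
  set R : ℝ := 3 - 2 * c with hR
  have hR1 : 1 < R := by simp [hR]; linarith
  have hR0 : (0:ℝ) < R := by linarith
  have hRne : R ≠ 0 := ne_of_gt hR0
  have hrlt : R⁻¹ < 1 := by
    rw [inv_lt_one_iff₀]; right; exact hR1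
  have hrge : (0:ℝ) ≤ R⁻¹ := by positivity
  have hgeo : HasSum (fun n : ℕ => R⁻¹ ^ n) (1 - R⁻¹)⁻¹ :=
    hasSum_geometric_of_lt_one hrge hrlt
  have h1r : (1:ℝ) - R⁻¹ ≠ 0 := by
    have : R⁻¹ < 1 := hrlt
    intro h; nlinarith
  have hs2 : (0:ℝ) < 1 + s ^ 2 := by positivity
  have hs2ne : (1:ℝ) + s ^ 2 ≠ 0 := ne_of_gt hs2
  set a : ℝ := 2 * ((1 - c) / R) ^ 2 with ha
  set P : ℝ := 1 + 1 * s / (1 + s ^ 2) with hP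
  set M : ℝ := 1 + (-1) * s / (1 + s ^ 2) with hM
  -- negative side
  have hm : HasSum (fun n : ℕ => timeAvgMeasure ω (Int.negSucc n))
      (a * (2 - c) * M * R⁻¹ * (1 - R⁻¹)⁻¹) := by
    have heq : (fun n : ℕ => timeAvgMeasure ω (Int.negSucc n))
        = fun n : ℕ => (a * (2 - c) * M * R⁻¹) * R⁻¹ ^ n := by
      funext n
      have hne : (Int.negSucc n) ≠ 0 := Int.negSucc_ne_zero n
      simp only [timeAvgMeasure, if_neg hne, Int.natAbs_negSucc]
      have hpos : ¬ (0 < Int.negSucc n) := by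
        simp [Int.negSucc_lt_zero]
      rw [if_neg hpos]
      rw [← hc, ← hs, ← hR, ← ha, ← hM]
      rw [pow_succ, div_eq_mul_inv, mul_inv, ← inv_pow]
      ring
    rw [heq]
    exact hgeo.mul_left _
  -- positive side
  have hp : HasSum (fun n : ℕ => timeAvgMeasure ω (Int.ofNat n))
      (a * (2 - c) * P * R⁻¹ * (1 - R⁻¹)⁻¹ + a) := by
    have hshift : HasSum (fun n : ℕ => timeAvgMeasure ω (Int.ofNat (n + 1)))
        (a * (2 - c) * P * R⁻¹ * (1 - R⁻¹)⁻¹) := by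
      have heq : (fun n : ℕ => timeAvgMeasure ω (Int.ofNat (n + 1)))
          = fun n : ℕ => (a * (2 - c) * P * R⁻¹) * R⁻¹ ^ n := by
        funext n
        have hne : (Int.ofNat (n + 1)) ≠ 0 := by
          rw [Int.ofNat_eq_natCast]; omega
        have hpos : (0: ℤ) < Int.ofNat (n + 1) := by
          rw [Int.ofNat_eq_natCast]; omega
        simp only [timeAvgMeasure, if_neg hne, if_pos hpos]
        have hnat : (Int.ofNat (n + 1)).natAbs = n + 1 := rfl
        rw [hnat, ← hc, ← hs, ← hR, ← ha, ← hP]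
        rw [pow_succ, div_eq_mul_inv, mul_inv, ← inv_pow]
        ring
      rw [heq]
      exact hgeo.mul_left _
    have := (hasSum_nat_add_iff (f := fun n : ℕ => timeAvgMeasure ω (Int.ofNat n)) 1).mp hshift
    simpa [timeAvgMeasure] using this
  have htot : HasSum (fun x : ℤ => timeAvgMeasure ω x)
      ((a * (2 - c) * P * R⁻¹ * (1 - R⁻¹)⁻¹ + a) + a * (2 - c) * M * R⁻¹ * (1 - R⁻¹)⁻¹) := by
    have h := hp.int_rec hm
    have heq : (fun x : ℤ => timeAvgMeasure ω x)
        = fun x : ℤ => Int.rec (fun n : ℕ => timeAvgMeasure ω (Int.ofNat n))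
            (fun n : ℕ => timeAvgMeasure ω (Int.negSucc n)) x := by
      funext x; cases x <;> rfl
    rw [heq]
    exact h
  rw [htot.tsum_eq]
  have hRm1 : R - 1 ≠ 0 := by intro h; rw [hR] at h; nlinarith
  have hcne : (1:ℝ) - c ≠ 0 := by intro h; nlinarith
  have key : (a * (2 - c) * P * R⁻¹ * (1 - R⁻¹)⁻¹ + a) + a * (2 - c) * M * R⁻¹ * (1 - R⁻¹)⁻¹
      = (2 - 2 * c) / (3 - 2 * c) := by
    have h1 : (1:ℝ) - R⁻¹ = (R - 1) / R := by field_simp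
    rw [ha, hP, hM, h1, hR]
    have e1 : (3 - 2 * c) ≠ 0 := by rw [← hR]; exact hRne
    have e2 : (3 - 2 * c) - 1 ≠ 0 := by rw [← hR]; exact hRm1
    field_simp
    ring
  rw [key, div_lt_one (by linarith : (0:ℝ) < 3 - 2 * c)]
  linarith
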